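/- Let γ > 0 and let g : ℝ → ℝ be a differentiable bijection with g'(x) > 0 for all x ∈ ℝ, with inverse function g⁻¹ : ℝ → ℝ. Define h : [0,∞) → ℝ by h(u) = (1/γ) ∫₀ᵘ (g⁻¹(z) − z) dz. Then for every x ∈ ℝ with g(x) ≥ 0, the point u = g(x) is the unique global minimizer over u ∈ [0,∞) of the function u ↦ (1/2)(x − u)² + γ h(u). (In the paper's notation, this states that (1 + γ ∂h)⁻¹ = g on this range.) -/
import Mathlib


/-- Let `γ > 0` and `g : ℝ → ℝ` be a differentiable bijection with `g' > 0`
everywhere, with inverse `ginv`. Define `h(u) = (1/γ) ∫₀ᵘ (ginv z − z) dz`. Then for every `x`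
with `g x ≥ 0`, the point `u = g x` is the unique global minimizer over `u ∈ [0,∞)` of
`u ↦ (1/2)(x − u)² + γ h(u)`. -/
theorem proximal_operator_construction_scalar
    (γ : ℝ) (hγ : 0 < γ)
    (g : ℝ → ℝ) (hgdiff : Differentiable ℝ g) (hg' : ∀ x : ℝ, 0 < deriv g x)
    (hgbij : Function.Bijective g)
    (ginv : ℝ → ℝ) (hlinv : Function.LeftInverse ginv g)
    (hrinv : Function.RightInverse ginv g)
    (h : ℝ → ℝ)
    (hh : ∀ u : ℝ, 0 ≤ u → h u = (1 / γ) * ∫ z in (0:ℝ)..u, (ginv z - z))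
    (x : ℝ) (hx : 0 ≤ g x) :
    (∀ u : ℝ, 0 ≤ u →
        (1 / 2) * (x - g x) ^ 2 + γ * h (g x) ≤ (1 / 2) * (x - u) ^ 2 + γ * h u) ∧
    (∀ u : ℝ, 0 ≤ u → u ≠ g x →
        (1 / 2) * (x - g x) ^ 2 + γ * h (g x) < (1 / 2) * (x - u) ^ 2 + γ * h u) := by
  have hmono : StrictMono g := strictMono_of_deriv_pos hg'
  set e := hmono.orderIsoOfSurjective g hgbij.2 with he
  have hcoe : ∀ z, e z = g z := fun z => rfl
  have hginv_eq : ∀ y, ginv y = e.symm y := by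
    intro y
    apply hgbij.1
    rw [hrinv y, ← hcoe, e.apply_symm_apply]
  have hginv_cont : Continuous ginv := by
    have : Continuous (e.symm : ℝ → ℝ) := OrderIso.continuous e.symm
    exact this.congr (fun y => (hginv_eq y).symm)
  have hginv_mono : StrictMono ginv := by
    intro a b hab
    rw [hginv_eq, hginv_eq]
    exact e.symm.strictMono hab
  have hga : ginv (g x) = x := hlinv x
  -- key identity
  have key : ∀ u : ℝ, 0 ≤ u →
      (1 / 2) * (x - u) ^ 2 + γ * h u - ((1 / 2) * (x - g x) ^ 2 + γ * h (g x))
        = ∫ z in (g x)..u, (ginv z - x) := by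
    intro u hu
    have hint : ∀ a b : ℝ, IntervalIntegrable (fun z => ginv z - z) MeasureTheory.volume a b :=
      fun a b => (hginv_cont.sub continuous_id).intervalIntegrable a b
    have h1 : γ * h u = ∫ z in (0:ℝ)..u, (ginv z - z) := by
      rw [hh u hu]; field_simp
    have h2 : γ * h (g x) = ∫ z in (0:ℝ)..(g x), (ginv z - z) := by
      rw [hh (g x) hx]; field_simp
    have h3 : (∫ z in (0:ℝ)..u, (ginv z - z)) - (∫ z in (0:ℝ)..(g x), (ginv z - z))
        = ∫ z in (g x)..u, (ginv z - z) :=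
      intervalIntegral.integral_interval_sub_left (hint 0 u) (hint 0 (g x))
    have h4 : (∫ z in (g x)..u, (z - x)) = (1 / 2) * (x - u) ^ 2 - (1 / 2) * (x - g x) ^ 2 := by
      have hid : IntervalIntegrable (fun z : ℝ => z) MeasureTheory.volume (g x) u :=
        (by continuity : Continuous fun z : ℝ => z).intervalIntegrable _ _
      have hc : IntervalIntegrable (fun _ : ℝ => x) MeasureTheory.volume (g x) u :=
        continuous_const.intervalIntegrable _ _
      rw [intervalIntegral.integral_sub hid hc]
      simp [integral_id]
      ring
    have h5 : (∫ z in (g x)..u, (ginv z - x))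
        = (∫ z in (g x)..u, (z - x)) + (∫ z in (g x)..u, (ginv z - z)) := by
      have hsm : IntervalIntegrable (fun z : ℝ => z - x) MeasureTheory.volume (g x) u :=
        (by continuity : Continuous fun z : ℝ => z - x).intervalIntegrable _ _
      rw [← intervalIntegral.integral_add hsm (hint _ _)]
      apply intervalIntegral.integral_congr
      intro z _; ring
    rw [h1, h2, h5, h4, ← h3]; ring
  have strict : ∀ u : ℝ, 0 ≤ u → u ≠ g x →
      (1 / 2) * (x - g x) ^ 2 + γ * h (g x) < (1 / 2) * (x - u) ^ 2 + γ * h u := by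
    intro u hu hne
    have hk := key u hu
    have hpos : 0 < ∫ z in (g x)..u, (ginv z - x) := by
      rcases lt_or_gt_of_ne hne with hlt | hgt
      · -- u < g x
        have : 0 < ∫ z in u..(g x), (x - ginv z) := by
          apply intervalIntegral.intervalIntegral_pos_of_pos_on
          · exact ((continuous_const.sub hginv_cont).intervalIntegrable _ _)
          · intro z hz
            have : ginv z < ginv (g x) := hginv_mono hz.2
            rw [hga] at this; linarith
          · exact hlt
        have hsymm : (∫ z in (g x)..u, (ginv z - x)) = ∫ z in u..(g x), (x - ginv z) := by
          rw [intervalIntegral.integral_symm, ← intervalIntegral.integral_neg]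
          apply intervalIntegral.integral_congr
          intro z _; ring
        rw [hsymm]; exact this
      · -- g x < u
        apply intervalIntegral.intervalIntegral_pos_of_pos_on
        · exact ((hginv_cont.sub continuous_const).intervalIntegrable _ _)
        · intro z hz
          have : ginv (g x) < ginv z := hginv_mono hz.1
          rw [hga] at this; linarith
        · exact hgt
    linarith
  refine ⟨fun u hu => ?_, strict⟩
  by_cases hne : u = g x
  · subst hne; exact le_refl _
  · exact (strict u hu hne).le
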